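/- The map j from linear functionals on ℂ[x] to shift-invariant linear operators on ℂ[x], given by j(L)(p)(x) = L(T_x(p)), is a linear bijection with inverse 𝔏 ↦ (p ↦ 𝔏(p)(0)). -/

import Mathlib

open Polynomial

/-- A linear operator on `ℂ[x]` is shift-invariant if it commutes with every
shift `T_a : p ↦ p(· + a)`. -/
def IsShiftInvariant (T : Polynomial ℂ →ₗ[ℂ] Polynomial ℂ) : Prop :=
  ∀ (a : ℂ) (p : Polynomial ℂ), T (p.comp (X + C a)) = (T p).comp (X + C a)

/-- The operator `j(L)`, defined on the monomial basis. -/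
noncomputable def jmap (L : Polynomial ℂ →ₗ[ℂ] ℂ) : Polynomial ℂ →ₗ[ℂ] Polynomial ℂ :=
  (Polynomial.basisMonomials ℂ).constr ℂ fun n =>
    (((X + C X : Polynomial (Polynomial ℂ))) ^ n).sum fun k a => monomial k (L a)

lemma jmap_eval (L : Polynomial ℂ →ₗ[ℂ] ℂ) (p : Polynomial ℂ) (x : ℂ) :
    (jmap L p).eval x = L (p.comp (X + C x)) := by
  have key : (Polynomial.leval x).comp (jmap L)
      = L.comp (Polynomial.aeval (X + C x : Polynomial ℂ)).toLinearMap := by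
    apply (Polynomial.basisMonomials ℂ).ext
    intro n
    simp only [LinearMap.comp_apply, AlgHom.toLinearMap_apply]
    rw [jmap, Module.Basis.constr_basis, Polynomial.coe_basisMonomials]
    have hmon : (Polynomial.aeval (X + C x : Polynomial ℂ)) ((monomial n 1 : Polynomial ℂ))
        = (X + C x) ^ n := by
      simp [Polynomial.aeval_monomial]
    rw [hmon]
    have hQ : ((X + C x : Polynomial ℂ)) ^ n
        = Polynomial.eval (C x) ((X + C X : Polynomial (Polynomial ℂ)) ^ n) := by
      simp [add_comm]
    rw [hQ]
    set Q : Polynomial (Polynomial ℂ) := (X + C X) ^ n with hQdef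
    rw [Polynomial.leval_apply]
    rw [Polynomial.sum_def, Polynomial.eval_finset_sum]
    rw [Polynomial.eval_eq_sum, Polynomial.sum_def, map_sum]
    apply Finset.sum_congr rfl
    intro k _
    rw [Polynomial.eval_monomial]
    have : Q.coeff k * (C x) ^ k = (x ^ k) • Q.coeff k := by
      rw [← Polynomial.C_pow, Polynomial.smul_eq_C_mul, mul_comm]
    rw [this, map_smul, smul_eq_mul, mul_comm]
  have := LinearMap.congr_fun key p
  simpa [Polynomial.leval_apply, Polynomial.comp, Polynomial.aeval_def, Polynomial.algebraMap_eq] using this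

lemma jmap_shift (L : Polynomial ℂ →ₗ[ℂ] ℂ) : IsShiftInvariant (jmap L) := by
  intro a p
  apply Polynomial.funext
  intro x
  rw [jmap_eval, Polynomial.eval_comp, Polynomial.eval_add, Polynomial.eval_X,
    Polynomial.eval_C, jmap_eval, Polynomial.comp_assoc]
  congr 2
  rw [Polynomial.add_comp, Polynomial.X_comp, Polynomial.C_comp, add_assoc,
    ← Polynomial.C_add]

/-- The map `j` from linear functionals to shift-invariant operators,
`j(L)(p)(x) = L(T_x p)`, is a bijection (it is linear, and its inverse is
`𝔏 ↦ (p ↦ 𝔏(p)(0))`). -/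
theorem functional_operator_bijection :
    -- `j` is well defined: for each functional `L` there is a unique
    -- shift-invariant linear operator `T` with `(T p)(x) = L(T_x p)`
    (∀ L : Polynomial ℂ →ₗ[ℂ] ℂ,
      ∃! T : Polynomial ℂ →ₗ[ℂ] Polynomial ℂ,
        IsShiftInvariant T ∧ ∀ (p : Polynomial ℂ) (x : ℂ),
          (T p).eval x = L (p.comp (X + C x))) ∧
    -- `j` is linear
    (∀ (L₁ L₂ : Polynomial ℂ →ₗ[ℂ] ℂ) (c : ℂ)
      (T₁ T₂ : Polynomial ℂ →ₗ[ℂ] Polynomial ℂ),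
      (∀ p x, (T₁ p).eval x = L₁ (p.comp (X + C x))) →
      (∀ p x, (T₂ p).eval x = L₂ (p.comp (X + C x))) →
      (∀ p x, ((T₁ + c • T₂) p).eval x = (L₁ + c • L₂) (p.comp (X + C x)))) ∧
    -- the inverse: every shift-invariant operator `T` equals `j` of the
    -- functional `p ↦ (T p)(0)`, so `j` is surjective with inverse `𝔏 ↦ 𝔏(·)(0)`
    (∀ T : Polynomial ℂ →ₗ[ℂ] Polynomial ℂ, IsShiftInvariant T →
      ∀ (p : Polynomial ℂ) (x : ℂ),
        (T p).eval x = (T (p.comp (X + C x))).eval 0) := by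
  refine ⟨?_, ?_, ?_⟩
  · intro L
    refine ⟨jmap L, ⟨jmap_shift L, fun p x => jmap_eval L p x⟩, ?_⟩
    rintro T ⟨-, hev⟩
    apply LinearMap.ext
    intro p
    apply Polynomial.funext
    intro x
    rw [hev, jmap_eval]
  · intro L₁ L₂ c T₁ T₂ h₁ h₂ p x
    simp [h₁ p x, h₂ p x, smul_eq_mul]
  · intro T hT p x
    rw [hT x p, Polynomial.eval_comp]
    simp
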